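/- Let p > 3 be a prime, θ a nontrivial additive character of F_p with values in ℂ, and λ ∈ F_p with λ ∉ {0, 1, −1}. Let N = #{(u, v) ∈ F_p × F_p : v² = u⁴ + 2λu² + 1}. Then (g(φ)·φ(−2λ)/(p−1)) · Σ_χ g(χ⁻¹)²·g(χ²·φ)·χ⁻¹(4λ²) = p·(N + 1 − p), where the sum runs over all multiplicative characters χ of F_p and both sides are complex numbers. -/

import Mathlib

open Finset

namespace GaussA2

variable {p : ℕ} [Fact p.Prime]

noncomputable def phic (p : ℕ) [Fact p.Prime] : MulChar (ZMod p) ℂ :=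
  (quadraticChar (ZMod p)).ringHomComp (Int.castRingHom ℂ)

lemma char_ne_two (hp : 3 < p) : ringChar (ZMod p) ≠ 2 := by
  rw [ZMod.ringChar_zmod_n]
  have := (Fact.out : p.Prime)
  omega

lemma phic_ne_one (hp : 3 < p) : phic p ≠ 1 :=
  (MulChar.ringHomComp_ne_one_iff (RingHom.injective_int _)).mpr
    (quadraticChar_ne_one (char_ne_two hp))

lemma phic_mul_self {a : ZMod p} (ha : a ≠ 0) : phic p a * phic p a = 1 := by
  have h := quadraticChar_sq_one (F := ZMod p) ha
  have : ((quadraticChar (ZMod p) a : ℤ) : ℂ) * ((quadraticChar (ZMod p) a : ℤ) : ℂ) = 1 := by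
    rw [← Int.cast_mul, ← sq, h, Int.cast_one]
  simpa [phic, MulChar.ringHomComp_apply] using this

lemma phic_zero : phic p 0 = 0 := by
  simp [phic, MulChar.ringHomComp_apply]

lemma two_ne_zero' (hp : 3 < p) : (2 : ZMod p) ≠ 0 := by
  have h2 : ((2 : ℕ) : ZMod p) ≠ 0 := by
    rw [Ne, ZMod.natCast_eq_zero_iff]
    intro h
    have := Nat.le_of_dvd (by norm_num) h
    omega
  simpa using h2

lemma sum_phic_mul (hp : 3 < p) (θ : AddChar (ZMod p) ℂ) (c : ZMod p) :
    ∑ x : ZMod p, phic p x * θ (c * x) = phic p c * gaussSum (phic p) θ := by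
  rcases eq_or_ne c 0 with rfl | hc
  · simp only [zero_mul, AddChar.map_zero_eq_one, mul_one, phic_zero]
    rw [MulChar.sum_eq_zero_of_ne_one (phic_ne_one hp)]
  · have hu : IsUnit c := isUnit_iff_ne_zero.mpr hc
    have h := gaussSum_mulShift (phic p) θ hu.unit
    have hg : gaussSum (phic p) (AddChar.mulShift θ hu.unit) =
        ∑ x : ZMod p, phic p x * θ (c * x) := by
      unfold gaussSum
      refine Finset.sum_congr rfl fun x _ => ?_
      rw [AddChar.mulShift_apply, IsUnit.unit_spec]
    rw [hg, IsUnit.unit_spec] at h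
    calc ∑ x : ZMod p, phic p x * θ (c * x)
        = phic p c * (phic p c * (∑ x : ZMod p, phic p x * θ (c * x))) := by
          rw [← mul_assoc, phic_mul_self hc, one_mul]
      _ = phic p c * gaussSum (phic p) θ := by rw [h]

lemma card_sqrts (hp : 3 < p) (a : ZMod p) :
    (((univ.filter (fun v : ZMod p => v ^ 2 = a)).card : ℕ) : ℂ) = phic p a + 1 := by
  have h := quadraticChar_card_sqrts (char_ne_two hp) a
  have hs : {x : ZMod p | x ^ 2 = a}.toFinset = univ.filter (fun v : ZMod p => v ^ 2 = a) := by
    ext x; simp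
  rw [hs] at h
  have := congrArg (Int.cast : ℤ → ℂ) h
  push_cast at this ⊢
  rw [this]
  simp [phic, MulChar.ringHomComp_apply]

lemma card_hyperbola (hp : 3 < p) {c : ZMod p} (hc : c ≠ 0) :
    (univ.filter (fun sy : ZMod p × ZMod p => sy.2 ^ 2 = sy.1 ^ 2 + c)).card = p - 1 := by
  have h2 := two_ne_zero' hp
  have hcard : (univ.filter (fun a : ZMod p => a ≠ 0)).card = p - 1 := by
    rw [Finset.filter_ne', Finset.card_erase_of_mem (mem_univ 0), card_univ, ZMod.card]
  rw [← hcard]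
  refine Finset.card_nbij' (fun sy => sy.2 - sy.1)
    (fun a => ((c * a⁻¹ - a) / 2, (c * a⁻¹ + a) / 2)) ?_ ?_ ?_ ?_
  · rintro ⟨s, y⟩ hsy
    simp only [mem_coe, mem_filter, mem_univ, true_and] at hsy ⊢
    intro h0
    apply hc
    linear_combination (y + s) * h0 - hsy
  · intro a ha
    simp only [mem_coe, mem_filter, mem_univ, true_and] at ha ⊢
    field_simp
    ring
  · rintro ⟨s, y⟩ hsy
    simp only [mem_coe, mem_filter, mem_univ, true_and] at hsy
    have hys : y - s ≠ 0 := by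
      intro h0
      apply hc
      linear_combination (y + s) * h0 - hsy
    have hkey : c * (y - s)⁻¹ = y + s := by
      have : c = (y - s) * (y + s) := by linear_combination -hsy
      rw [this, mul_comm (y - s), mul_assoc, mul_inv_cancel₀ hys, mul_one]
    simp only [hkey, Prod.mk.injEq]
    constructor
    · field_simp; ring
    · field_simp; ring
  · intro a ha
    simp only [mem_coe, mem_filter, mem_univ, true_and] at ha
    field_simp
    ring

lemma sum_phic_sq_add (hp : 3 < p) {c : ZMod p} (hc : c ≠ 0) :
    ∑ s : ZMod p, phic p (s ^ 2 + c) = -1 := by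
  have hp1 : 1 ≤ p := (Fact.out : p.Prime).one_lt.le
  have key : ∑ s : ZMod p, (phic p (s ^ 2 + c) + 1) = (p : ℂ) - 1 := by
    have h1 : ∀ s : ZMod p, phic p (s ^ 2 + c) + 1 =
        (((univ.filter (fun y : ZMod p => y ^ 2 = s ^ 2 + c)).card : ℕ) : ℂ) :=
      fun s => (card_sqrts hp _).symm
    rw [Finset.sum_congr rfl fun s _ => h1 s]
    have h2 : (univ.filter (fun sy : ZMod p × ZMod p => sy.2 ^ 2 = sy.1 ^ 2 + c)).card
        = ∑ s : ZMod p, (univ.filter (fun y : ZMod p => y ^ 2 = s ^ 2 + c)).card := by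
      rw [Finset.card_filter, Fintype.sum_prod_type]
      exact Finset.sum_congr rfl fun s _ => (Finset.card_filter _ _).symm
    rw [← Nat.cast_sum, ← h2, card_hyperbola hp hc]
    push_cast [Nat.cast_sub hp1]
    ring
  have h3 : ∑ s : ZMod p, (phic p (s ^ 2 + c) + 1) =
      (∑ s : ZMod p, phic p (s ^ 2 + c)) + p := by
    rw [Finset.sum_add_distrib, Finset.sum_const, card_univ, ZMod.card]
    simp
  rw [h3] at key
  linear_combination key

lemma orth (b : ZMod p) :
    ∑ χ : MulChar (ZMod p) ℂ, χ b = if b = 1 then ((p : ℂ) - 1) else 0 := by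
  have h := DirichletCharacter.sum_characters_eq ℂ (n := p) b
  rw [h, Nat.totient_prime (Fact.out : p.Prime)]
  split_ifs with hb
  · push_cast [Nat.cast_sub (Fact.out : p.Prime).one_lt.le]; ring
  · rfl

lemma sum_cubic (hp : 3 < p) {l : ZMod p} (hl1 : l ≠ 1) (hlm1 : l ≠ -1) :
    ∑ t : ZMod p, phic p t * phic p (t ^ 2 + 2 * l * t + 1) =
      (∑ u : ZMod p, phic p (u ^ 4 + 2 * l * u ^ 2 + 1)) + 1 := by
  have hc : (1 : ZMod p) - l ^ 2 ≠ 0 := by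
    intro h
    rcases mul_eq_zero.mp (show (1 - l) * (1 + l) = 0 by linear_combination h) with h1 | h2
    · exact hl1 (by linear_combination -h1)
    · exact hlm1 (by linear_combination h2)
  -- reindex the quadratic sum
  have h3 : ∑ t : ZMod p, phic p (t ^ 2 + 2 * l * t + 1) = -1 := by
    have := sum_phic_sq_add hp hc
    rw [← this]
    refine Fintype.sum_equiv (Equiv.addRight l) _ _ fun t => ?_
    simp only [Equiv.coe_addRight]
    congr 1
    ring
  -- fiberwise sum over u ↦ u^2
  have h1 : ∑ u : ZMod p, phic p (u ^ 4 + 2 * l * u ^ 2 + 1) =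
      ∑ t : ZMod p, (phic p t + 1) * phic p (t ^ 2 + 2 * l * t + 1) := by
    have hfib := Finset.sum_fiberwise (s := (univ : Finset (ZMod p)))
      (g := fun u : ZMod p => u ^ 2)
      (f := fun u : ZMod p => phic p (u ^ 4 + 2 * l * u ^ 2 + 1))
    rw [← hfib]
    refine Finset.sum_congr rfl fun t _ => ?_
    have : ∀ u ∈ univ.filter (fun u : ZMod p => u ^ 2 = t),
        phic p (u ^ 4 + 2 * l * u ^ 2 + 1) = phic p (t ^ 2 + 2 * l * t + 1) := by
      intro u hu
      rw [mem_filter] at hu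
      rw [← hu.2]; congr 1; ring
    rw [Finset.sum_congr rfl this, Finset.sum_const, nsmul_eq_mul, card_sqrts hp t]
  rw [h1]
  simp only [add_mul, one_mul]
  rw [Finset.sum_add_distrib, h3]
  ring


lemma big_sum (hp : 3 < p) (θ : AddChar (ZMod p) ℂ) {l : ZMod p} (hl0 : l ≠ 0) :
    ∑ χ : MulChar (ZMod p) ℂ,
        gaussSum χ⁻¹ θ ^ 2 * gaussSum (χ ^ 2 * phic p) θ * χ⁻¹ (4 * l ^ 2) =
      ((p : ℂ) - 1) * phic p (2 * l) * gaussSum (phic p) θ *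
        ∑ t : ZMod p, phic p t * phic p (t ^ 2 + 2 * l * t + 1) := by
  have h2 : (2 : ZMod p) ≠ 0 := two_ne_zero' hp
  have h4 : (4 : ZMod p) * l ^ 2 ≠ 0 := by
    have : (4 : ZMod p) = 2 * 2 := by norm_num
    rw [this]
    exact mul_ne_zero (mul_ne_zero h2 h2) (pow_ne_zero 2 hl0)
  have h4' : (4 : ZMod p) ≠ 0 := left_ne_zero_of_mul h4
  -- Step 1: expand each character term into a triple sum
  have expand : ∀ χ : MulChar (ZMod p) ℂ,
      gaussSum χ⁻¹ θ ^ 2 * gaussSum (χ ^ 2 * phic p) θ * χ⁻¹ (4 * l ^ 2) =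
      ∑ x : ZMod p, ∑ z : ZMod p, ∑ y : ZMod p,
        (θ x * θ y * θ z * phic p z) * χ (x⁻¹ * y⁻¹ * z ^ 2 * (4 * l ^ 2)⁻¹) := by
    intro χ
    rw [pow_two]
    simp only [gaussSum]
    rw [Finset.sum_mul_sum, Finset.sum_mul_sum, Finset.sum_mul]
    refine Finset.sum_congr rfl fun x _ => ?_
    rw [Finset.sum_mul]
    refine Finset.sum_congr rfl fun z _ => ?_
    rw [Finset.sum_mul, Finset.sum_mul]
    refine Finset.sum_congr rfl fun y _ => ?_
    rw [MulChar.inv_apply' χ x, MulChar.inv_apply' χ y, MulChar.inv_apply' χ (4 * l ^ 2),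
      MulChar.mul_apply, MulChar.pow_apply' χ two_ne_zero z,
      map_mul χ (x⁻¹ * y⁻¹ * z ^ 2), map_mul χ (x⁻¹ * y⁻¹), map_mul χ x⁻¹, map_pow]
    ring
  rw [Finset.sum_congr rfl fun χ _ => expand χ]
  -- Step 2: swap the character sum inside and apply orthogonality
  rw [Finset.sum_comm]
  have step2 : ∀ x : ZMod p, (∑ χ : MulChar (ZMod p) ℂ, ∑ z : ZMod p, ∑ y : ZMod p,
      (θ x * θ y * θ z * phic p z) * χ (x⁻¹ * y⁻¹ * z ^ 2 * (4 * l ^ 2)⁻¹)) =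
      ∑ z : ZMod p, ∑ y : ZMod p, (θ x * θ y * θ z * phic p z) *
        (if x⁻¹ * y⁻¹ * z ^ 2 * (4 * l ^ 2)⁻¹ = 1 then ((p : ℂ) - 1) else 0) := by
    intro x
    rw [Finset.sum_comm]
    refine Finset.sum_congr rfl fun z _ => ?_
    rw [Finset.sum_comm]
    refine Finset.sum_congr rfl fun y _ => ?_
    rw [← Finset.mul_sum, orth _]
  rw [Finset.sum_congr rfl fun x _ => step2 x]
  -- Step 3: evaluate the y-sum
  have step3 : ∀ x z : ZMod p, (∑ y : ZMod p, (θ x * θ y * θ z * phic p z) *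
      (if x⁻¹ * y⁻¹ * z ^ 2 * (4 * l ^ 2)⁻¹ = 1 then ((p : ℂ) - 1) else 0)) =
      (if x = 0 then 0 else
        θ x * θ (z ^ 2 * (4 * l ^ 2)⁻¹ * x⁻¹) * θ z * phic p z * ((p : ℂ) - 1)) := by
    intro x z
    rcases eq_or_ne x 0 with rfl | hx
    · simp
    rcases eq_or_ne z 0 with rfl | hz
    · simp [phic_zero]
    rw [if_neg hx]
    have hcond : ∀ y : ZMod p,
        (x⁻¹ * y⁻¹ * z ^ 2 * (4 * l ^ 2)⁻¹ = 1) ↔ y = z ^ 2 * (4 * l ^ 2)⁻¹ * x⁻¹ := by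
      intro y
      constructor
      · intro h
        have hy : y ≠ 0 := by
          rintro rfl
          simp at h
        field_simp at h ⊢
        linear_combination -h
      · rintro rfl
        field_simp
    have : ∀ y : ZMod p, (θ x * θ y * θ z * phic p z) *
        (if x⁻¹ * y⁻¹ * z ^ 2 * (4 * l ^ 2)⁻¹ = 1 then ((p : ℂ) - 1) else 0) =
        if y = z ^ 2 * (4 * l ^ 2)⁻¹ * x⁻¹ then
          (θ x * θ y * θ z * phic p z) * ((p : ℂ) - 1) else 0 := by
      intro y
      rw [mul_ite, mul_zero]
      simp_rw [hcond y]
    rw [Finset.sum_congr rfl fun y _ => this y, Finset.sum_ite_eq' univ _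
      (fun y => (θ x * θ y * θ z * phic p z) * ((p : ℂ) - 1)), if_pos (mem_univ _)]
  rw [Finset.sum_congr rfl fun x _ => Finset.sum_congr rfl fun z _ => step3 x z]
  -- Step 4: substitute z = 2*l*x*t
  have step4 : ∀ x : ZMod p,
      (∑ z : ZMod p, (if x = 0 then 0 else
        θ x * θ (z ^ 2 * (4 * l ^ 2)⁻¹ * x⁻¹) * θ z * phic p z * ((p : ℂ) - 1))) =
      ∑ t : ZMod p, ((p : ℂ) - 1) * phic p (2 * l) * phic p x *
        (phic p t * θ ((t ^ 2 + 2 * l * t + 1) * x)) := by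
    intro x
    rcases eq_or_ne x 0 with rfl | hx
    · simp [phic_zero]
    simp only [if_neg hx]
    have hu : (2 * l * x : ZMod p) ≠ 0 := mul_ne_zero (mul_ne_zero h2 hl0) hx
    refine (Fintype.sum_bijective (fun t : ZMod p => 2 * l * x * t)
      (mulLeft_bijective₀ _ hu) _ _ fun t => ?_).symm
    have harg : (2 * l * x * t) ^ 2 * (4 * l ^ 2)⁻¹ * x⁻¹ = x * t ^ 2 := by
      field_simp
      ring
    show _ = θ x * θ ((2 * l * x * t) ^ 2 * (4 * l ^ 2)⁻¹ * x⁻¹) * θ (2 * l * x * t) *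
        phic p (2 * l * x * t) * ((p : ℂ) - 1)
    rw [harg, map_mul (phic p) (2 * l * x) t, map_mul (phic p) (2 * l) x,
      show θ x * θ (x * t ^ 2) * θ (2 * l * x * t) = θ ((t ^ 2 + 2 * l * t + 1) * x) by
        rw [← AddChar.map_add_eq_mul, ← AddChar.map_add_eq_mul]; congr 1; ring]
    ring
  rw [Finset.sum_congr rfl fun x _ => step4 x, Finset.sum_comm]
  -- Step 5: evaluate the x-sum via the twisted Gauss sum
  have step5 : ∀ t : ZMod p,
      (∑ x : ZMod p, ((p : ℂ) - 1) * phic p (2 * l) * phic p x *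
        (phic p t * θ ((t ^ 2 + 2 * l * t + 1) * x))) =
      ((p : ℂ) - 1) * phic p (2 * l) * gaussSum (phic p) θ *
        (phic p t * phic p (t ^ 2 + 2 * l * t + 1)) := by
    intro t
    have hsum := sum_phic_mul hp θ (t ^ 2 + 2 * l * t + 1)
    calc (∑ x : ZMod p, ((p : ℂ) - 1) * phic p (2 * l) * phic p x *
          (phic p t * θ ((t ^ 2 + 2 * l * t + 1) * x)))
        = ((p : ℂ) - 1) * phic p (2 * l) * phic p t *
            ∑ x : ZMod p, phic p x * θ ((t ^ 2 + 2 * l * t + 1) * x) := by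
          rw [Finset.mul_sum]
          exact Finset.sum_congr rfl fun x _ => by ring
      _ = _ := by rw [hsum]; ring
  rw [Finset.sum_congr rfl fun t _ => step5 t, ← Finset.mul_sum]


lemma phic_quadratic : (phic p).IsQuadratic :=
  (quadraticChar_isQuadratic (ZMod p)).comp _

end GaussA2

open Finset GaussA2 in
theorem gauss_sum_A2 (p : ℕ) [Fact p.Prime] (hp : 3 < p)
    (θ : AddChar (ZMod p) ℂ) (hθ : θ ≠ 1)
    (l : ZMod p) (hl0 : l ≠ 0) (hl1 : l ≠ 1) (hlm1 : l ≠ -1)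
    (N : ℕ)
    (hN : N = (Finset.univ.filter (fun uv : ZMod p × ZMod p =>
      uv.2 ^ 2 = uv.1 ^ 4 + 2 * l * uv.1 ^ 2 + 1)).card) :
    letI φ : MulChar (ZMod p) ℂ := (quadraticChar (ZMod p)).ringHomComp (Int.castRingHom ℂ)
    (gaussSum φ θ * φ (-2 * l) / ((p : ℂ) - 1)) *
        ∑ᶠ χ : MulChar (ZMod p) ℂ,
          gaussSum χ⁻¹ θ ^ 2 * gaussSum (χ ^ 2 * φ) θ * χ⁻¹ (4 * l ^ 2) =
      (p : ℂ) * ((N : ℂ) + 1 - (p : ℂ)) := by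
  show gaussSum (phic p) θ * (phic p) (-2 * l) / ((p : ℂ) - 1) *
      (∑ᶠ χ : MulChar (ZMod p) ℂ,
        gaussSum χ⁻¹ θ ^ 2 * gaussSum (χ ^ 2 * phic p) θ * χ⁻¹ (4 * l ^ 2)) =
    (p : ℂ) * ((N : ℂ) + 1 - (p : ℂ))
  have h2 : (2 : ZMod p) ≠ 0 := two_ne_zero' hp
  have hp1 : ((p : ℂ) - 1) ≠ 0 := by
    rw [sub_ne_zero]
    exact_mod_cast (by omega : p ≠ 1)
  -- the Gauss sum squared
  have gsq : gaussSum (phic p) θ * gaussSum (phic p) θ = phic p (-1) * (p : ℂ) := by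
    have h := gaussSum_sq (phic_ne_one hp) phic_quadratic (AddChar.IsPrimitive.of_ne_one hθ)
    rw [ZMod.card] at h
    rw [← sq]
    exact h
  have hm1 : phic p (-1) * phic p (-1) = 1 :=
    phic_mul_self (neg_ne_zero.mpr one_ne_zero)
  have h2l : phic p (2 * l) * phic p (2 * l) = 1 :=
    phic_mul_self (mul_ne_zero h2 hl0)
  have hsplit : phic p (-2 * l) = phic p (-1) * phic p (2 * l) := by
    rw [show (-2 * l : ZMod p) = -1 * (2 * l) by ring, map_mul]
  -- the point count
  have hNc : (N : ℂ) = (∑ u : ZMod p, phic p (u ^ 4 + 2 * l * u ^ 2 + 1)) + (p : ℂ) := by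
    have h1 : N = ∑ u : ZMod p,
        (univ.filter (fun v : ZMod p => v ^ 2 = u ^ 4 + 2 * l * u ^ 2 + 1)).card := by
      rw [hN, Finset.card_filter, Fintype.sum_prod_type]
      exact Finset.sum_congr rfl fun u _ => (Finset.card_filter _ _).symm
    rw [h1, Nat.cast_sum,
      Finset.sum_congr rfl fun u _ => card_sqrts hp (u ^ 4 + 2 * l * u ^ 2 + 1),
      Finset.sum_add_distrib, Finset.sum_const, card_univ, ZMod.card]
    simp
  rw [finsum_eq_sum_of_fintype, big_sum hp θ hl0, sum_cubic hp hl1 hlm1, hsplit, hNc]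
  set Su := ∑ u : ZMod p, phic p (u ^ 4 + 2 * l * u ^ 2 + 1) with hSu
  rw [div_mul_eq_mul_div, div_eq_iff hp1]
  linear_combination (((p : ℂ) - 1) * (Su + 1)) *
    (phic p (-1) * (phic p (2 * l) * phic p (2 * l)) * gsq +
      (p : ℂ) * (phic p (2 * l) * phic p (2 * l)) * hm1 + (p : ℂ) * h2l)
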